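/- For any dyadic rational x ≠ 0, the games *:x and 0 are incomparable modulo the dicot universe in misère play; specifically, * + 0 is a previous-player win while * + *:x is a next-player win under misère play. -/

import Mathlib

universe u

namespace SetTheory

inductive PGame : Type (u + 1)
  | mk : ∀ α β : Type u, (α → PGame) → (β → PGame) → PGame

namespace PGame

def LeftMoves : PGame → Type u
  | mk l _ _ _ => l

def RightMoves : PGame → Type u
  | mk _ r _ _ => r

def moveLeft : ∀ g : PGame, LeftMoves g → PGame
  | mk _l _ L _ => L

def moveRight : ∀ g : PGame, RightMoves g → PGame
  | mk _ _r _ R => R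

instance : Zero PGame := ⟨⟨PEmpty, PEmpty, PEmpty.elim, PEmpty.elim⟩⟩

inductive IsOption : PGame → PGame → Prop
  | moveLeft {x : PGame} (i : x.LeftMoves) : IsOption (x.moveLeft i) x
  | moveRight {x : PGame} (i : x.RightMoves) : IsOption (x.moveRight i) x

def Subsequent : PGame → PGame → Prop :=
  Relation.TransGen IsOption

def neg : PGame → PGame
  | ⟨l, r, L, R⟩ => ⟨r, l, fun i => neg (R i), fun i => neg (L i)⟩

instance : Neg PGame :=
  ⟨neg⟩

def addAux (xl xr : Type u) (fL : xl → PGame.{u} → PGame.{u}) (fR : xr → PGame.{u} → PGame.{u}) :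
    PGame.{u} → PGame.{u}
  | mk yl yr yL yR =>
    mk (xl ⊕ yl) (xr ⊕ yr)
      (Sum.elim (fun i => fL i (mk yl yr yL yR)) (fun i => addAux xl xr fL fR (yL i)))
      (Sum.elim (fun i => fR i (mk yl yr yL yR)) (fun i => addAux xl xr fL fR (yR i)))

def add : PGame.{u} → PGame.{u} → PGame.{u}
  | mk xl xr xL xR => addAux xl xr (fun i => add (xL i)) (fun i => add (xR i))

instance : Add PGame.{u} :=
  ⟨add⟩

def star : PGame.{u} :=
  ⟨PUnit, PUnit, fun _ => 0, fun _ => 0⟩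

end PGame

end SetTheory

open SetTheory

namespace Sprigs

/-- Partizan games (in the lowest universe). -/
abbrev PG : Type 1 := PGame.{0}

/-- Winning predicates moving first under misère play:
`(mw G).1` = Left wins moving first; `(mw G).2` = Right wins moving first. -/
def mw : PG → Prop × Prop
  | PGame.mk α β L R =>
    ((IsEmpty α ∨ ∃ i, ¬ (mw (L i)).2), (IsEmpty β ∨ ∃ j, ¬ (mw (R j)).1))

/-- Winning predicates moving first under normal play. -/
def nw : PG → Prop × Prop
  | PGame.mk _ _ L R => ((∃ i, ¬ (nw (L i)).2), (∃ j, ¬ (nw (R j)).1))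

/-- Outcome classes. -/
inductive Outcome : Type
  | L | R | N | P
deriving DecidableEq

/-- The outcome determined by "Left wins moving first" and "Right wins moving first". -/
noncomputable def outcomeOf (wl wr : Prop) : Outcome :=
  haveI := Classical.propDecidable wl
  haveI := Classical.propDecidable wr
  if wl then (if wr then .N else .L) else (if wr then .R else .P)

/-- Misère-play outcome. -/
noncomputable def mo (G : PG) : Outcome := outcomeOf (mw G).1 (mw G).2

/-- Normal-play outcome. -/
noncomputable def no (G : PG) : Outcome := outcomeOf (nw G).1 (nw G).2

/-- Partial order on outcomes: R < P < L and R < N < L, with P, N incomparable. -/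
def Outcome.le : Outcome → Outcome → Prop
  | .R, _ => True
  | _, .L => True
  | a, b => a = b

def Outcome.lt (a b : Outcome) : Prop := Outcome.le a b ∧ a ≠ b

/-- Dicot games: every subposition has moves for both players or neither. -/
def Dicot : PG → Prop
  | PGame.mk α β L R =>
    ((IsEmpty α ∧ IsEmpty β) ∨ (Nonempty α ∧ Nonempty β)) ∧
      (∀ i, Dicot (L i)) ∧ (∀ j, Dicot (R j))

/-- Ordinal sum `G : H`. -/
def ordSum (G : PG) : PG → PGame
  | PGame.mk α β L R =>
    PGame.mk (G.LeftMoves ⊕ α) (G.RightMoves ⊕ β)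
      (Sum.elim G.moveLeft (fun a => ordSum G (L a)))
      (Sum.elim G.moveRight (fun b => ordSum G (R b)))

/-- Canonical form of a natural number as a game. -/
def natGame : ℕ → PGame
  | 0 => PGame.mk PEmpty PEmpty PEmpty.elim PEmpty.elim
  | n + 1 => PGame.mk PUnit PEmpty (fun _ => natGame n) PEmpty.elim

/-- Canonical form of an integer as a game. -/
def intGame (m : ℤ) : PG := if 0 ≤ m then natGame m.toNat else -natGame (-m).toNat

/-- Canonical form of the dyadic rational `m / 2 ^ n` as a game. -/
def dGame : ℕ → ℤ → PGame
  | 0, m => intGame m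
  | n + 1, m =>
    if m % 2 = 0 then dGame n (m / 2)
    else PGame.mk PUnit PUnit (fun _ => dGame n ((m - 1) / 2)) (fun _ => dGame n ((m + 1) / 2))

/-- A rational number is dyadic if its denominator is a power of two. -/
def IsDyadic (q : ℚ) : Prop := ∃ n : ℕ, q.den = 2 ^ n

/-- The canonical-form game of a dyadic rational. -/
def qGame (q : ℚ) : PG := dGame (Nat.log 2 q.den) q.num

/-- The Sprig `* : x` for a dyadic rational `x`. -/
def sprig (q : ℚ) : PG := ordSum PGame.star (qGame q)

/-- The Sprig `* : x̄` where `x̄` is the conjugate of the dyadic rational `x`. -/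
def sprigNeg (q : ℚ) : PG := ordSum PGame.star (-qGame q)

/-- Disjunctive sum of a list of games. -/
def listSum (l : List PG) : PG := l.foldr (· + ·) 0

/-- The position `(X, Y) = Σ_{x ∈ X} *:x + Σ_{y ∈ Y} *:(-y)`. -/
def sprigsGame (X Y : List ℚ) : PG := listSum (X.map sprig ++ Y.map sprigNeg)

/-- The minimum of a nonempty multiset of rationals (0 for the empty multiset). -/
noncomputable def mmin (s : Multiset ℚ) : ℚ :=
  if h : s = 0 then 0 else
    s.toFinset.min' (by rwa [Multiset.toFinset_nonempty])

/-- The edge `ε` computed from the reduced multisets `X' = X \ Y` and `Y' = Y \ X`. -/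
noncomputable def edge (X Y : Multiset ℚ) : ℚ :=
  if X - Y = 0 ∨ Y - X = 0 then 0 else mmin (X - Y) - mmin (Y - X)

/-- The universe `S` of finite sums of Sprigs (and `*`). -/
inductive InS : PG → Prop
  | star : InS PGame.star
  | sprig {q : ℚ} (h : IsDyadic q) : InS (sprig q)
  | sprigNeg {q : ℚ} (h : IsDyadic q) : InS (sprigNeg q)
  | add {a b : PG} : InS a → InS b → InS (a + b)

/-- A universe: a set of games closed under disjunctive sum and followers. -/
def IsUniverse (S : Set PG) : Prop :=
  (∀ a ∈ S, ∀ b ∈ S, a + b ∈ S) ∧ ∀ a ∈ S, ∀ b, PGame.Subsequent b a → b ∈ S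

open PGame

lemma leftMoves_add' (x y : PG) : (x + y).LeftMoves = (x.LeftMoves ⊕ y.LeftMoves) := by
  cases x; cases y; rfl

lemma rightMoves_add' (x y : PG) : (x + y).RightMoves = (x.RightMoves ⊕ y.RightMoves) := by
  cases x; cases y; rfl

def toLeftMovesAdd {x y : PG} : x.LeftMoves ⊕ y.LeftMoves ≃ (x + y).LeftMoves :=
  Equiv.cast (leftMoves_add' x y).symm

def toRightMovesAdd {x y : PG} : x.RightMoves ⊕ y.RightMoves ≃ (x + y).RightMoves :=
  Equiv.cast (rightMoves_add' x y).symm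

lemma add_moveLeft_inl {x y : PG} (i : x.LeftMoves) :
    (x + y).moveLeft (toLeftMovesAdd (Sum.inl i)) = x.moveLeft i + y := by
  cases x; cases y; rfl

lemma add_moveLeft_inr {x y : PG} (i : y.LeftMoves) :
    (x + y).moveLeft (toLeftMovesAdd (Sum.inr i)) = x + y.moveLeft i := by
  cases x; cases y; rfl

lemma add_moveRight_inl {x y : PG} (i : x.RightMoves) :
    (x + y).moveRight (toRightMovesAdd (Sum.inl i)) = x.moveRight i + y := by
  cases x; cases y; rfl

lemma add_moveRight_inr {x y : PG} (i : y.RightMoves) :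
    (x + y).moveRight (toRightMovesAdd (Sum.inr i)) = x + y.moveRight i := by
  cases x; cases y; rfl

lemma leftMoves_add_cases {x y : PG} (k : (x + y).LeftMoves) {P : (x + y).LeftMoves → Prop}
    (hl : ∀ i, P (toLeftMovesAdd (Sum.inl i))) (hr : ∀ i, P (toLeftMovesAdd (Sum.inr i))) : P k := by
  rw [← toLeftMovesAdd.apply_symm_apply k]
  rcases toLeftMovesAdd.symm k with i | i
  · exact hl i
  · exact hr i

lemma rightMoves_add_cases {x y : PG} (k : (x + y).RightMoves) {P : (x + y).RightMoves → Prop}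
    (hl : ∀ i, P (toRightMovesAdd (Sum.inl i))) (hr : ∀ i, P (toRightMovesAdd (Sum.inr i))) : P k := by
  rw [← toRightMovesAdd.apply_symm_apply k]
  rcases toRightMovesAdd.symm k with i | i
  · exact hl i
  · exact hr i

lemma star_moveLeft (x : (PGame.star : PG).LeftMoves) : (PGame.star : PG).moveLeft x = 0 := rfl

lemma star_moveRight (x : (PGame.star : PG).RightMoves) : (PGame.star : PG).moveRight x = 0 := rfl

instance isEmpty_zero_leftMoves' : IsEmpty (LeftMoves (0 : PG)) := inferInstanceAs (IsEmpty PEmpty)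

instance isEmpty_zero_rightMoves' : IsEmpty (RightMoves (0 : PG)) := inferInstanceAs (IsEmpty PEmpty)

instance isEmpty_add_leftMoves' (x y : PG) [IsEmpty x.LeftMoves] [IsEmpty y.LeftMoves] :
    IsEmpty (x + y).LeftMoves :=
  ⟨fun k => by rcases (toLeftMovesAdd.symm k) with i | i <;> exact isEmptyElim i⟩

instance isEmpty_add_rightMoves' (x y : PG) [IsEmpty x.RightMoves] [IsEmpty y.RightMoves] :
    IsEmpty (x + y).RightMoves :=
  ⟨fun k => by rcases (toRightMovesAdd.symm k) with i | i <;> exact isEmptyElim i⟩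

lemma mw_fst (G : PG) : (mw G).1 ↔ (IsEmpty G.LeftMoves ∨ ∃ i, ¬ (mw (G.moveLeft i)).2) := by
  cases G with
  | mk a b L R => simp only [mw]; rfl

lemma mw_snd (G : PG) : (mw G).2 ↔ (IsEmpty G.RightMoves ∨ ∃ j, ¬ (mw (G.moveRight j)).1) := by
  cases G with
  | mk a b L R => simp only [mw]; rfl

lemma mw_zz1 : (mw ((0 : PG) + 0)).1 := by
  rw [mw_fst]; exact Or.inl inferInstance

lemma mw_zz2 : (mw ((0 : PG) + 0)).2 := by
  rw [mw_snd]; exact Or.inl inferInstance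

lemma not_mw_sz1 : ¬ (mw (PGame.star + (0 : PG))).1 := by
  intro h
  rw [mw_fst] at h
  rcases h with he | ⟨i, hi⟩
  · exact he.false (toLeftMovesAdd (Sum.inl PUnit.unit))
  · apply hi
    refine leftMoves_add_cases (P := fun i => (mw ((PGame.star + (0 : PG)).moveLeft i)).2) i ?_ ?_
    · intro u
      rw [add_moveLeft_inl, star_moveLeft]
      exact mw_zz2
    · intro e
      exact isEmptyElim e

lemma not_mw_sz2 : ¬ (mw (PGame.star + (0 : PG))).2 := by
  intro h
  rw [mw_snd] at h
  rcases h with he | ⟨j, hj⟩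
  · exact he.false (toRightMovesAdd (Sum.inl PUnit.unit))
  · apply hj
    refine rightMoves_add_cases (P := fun j => (mw ((PGame.star + (0 : PG)).moveRight j)).1) j ?_ ?_
    · intro u
      rw [add_moveRight_inl, star_moveRight]
      exact mw_zz1
    · intro e
      exact isEmptyElim e

lemma not_mw_zs1 : ¬ (mw ((0 : PG) + PGame.star)).1 := by
  intro h
  rw [mw_fst] at h
  rcases h with he | ⟨i, hi⟩
  · exact he.false (toLeftMovesAdd (Sum.inr PUnit.unit))
  · apply hi
    refine leftMoves_add_cases (P := fun i => (mw (((0 : PG) + PGame.star).moveLeft i)).2) i ?_ ?_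
    · intro e
      exact isEmptyElim e
    · intro u
      rw [add_moveLeft_inr, star_moveLeft]
      exact mw_zz2

lemma not_mw_zs2 : ¬ (mw ((0 : PG) + PGame.star)).2 := by
  intro h
  rw [mw_snd] at h
  rcases h with he | ⟨j, hj⟩
  · exact he.false (toRightMovesAdd (Sum.inr PUnit.unit))
  · apply hj
    refine rightMoves_add_cases (P := fun j => (mw (((0 : PG) + PGame.star).moveRight j)).1) j ?_ ?_
    · intro e
      exact isEmptyElim e
    · intro u
      rw [add_moveRight_inr, star_moveRight]
      exact mw_zz1

lemma ordSum_star_left (H : PGame) :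
    ∃ i : (ordSum PGame.star H).LeftMoves, (ordSum PGame.star H).moveLeft i = 0 := by
  cases H with
  | mk a b L R => exact ⟨Sum.inl PUnit.unit, rfl⟩

lemma ordSum_star_right (H : PGame) :
    ∃ j : (ordSum PGame.star H).RightMoves, (ordSum PGame.star H).moveRight j = 0 := by
  cases H with
  | mk a b L R => exact ⟨Sum.inl PUnit.unit, rfl⟩

lemma mw_ss1 (q : ℚ) : (mw (sprig q + PGame.star)).1 := by
  obtain ⟨i, hi⟩ := ordSum_star_left (qGame q)
  rw [mw_fst]
  refine Or.inr ⟨toLeftMovesAdd (Sum.inl i), ?_⟩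
  rw [add_moveLeft_inl (x := sprig q) (y := PGame.star) i]
  show ¬ (mw ((ordSum PGame.star (qGame q)).moveLeft i + PGame.star)).2
  rw [hi]
  exact not_mw_zs2

lemma mw_ss2 (q : ℚ) : (mw (sprig q + PGame.star)).2 := by
  obtain ⟨j, hj⟩ := ordSum_star_right (qGame q)
  rw [mw_snd]
  refine Or.inr ⟨toRightMovesAdd (Sum.inl j), ?_⟩
  rw [add_moveRight_inl (x := sprig q) (y := PGame.star) j]
  show ¬ (mw ((ordSum PGame.star (qGame q)).moveRight j + PGame.star)).1
  rw [hj]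
  exact not_mw_zs1

lemma mw_star_sprig1 (q : ℚ) : (mw (PGame.star + sprig q)).1 := by
  obtain ⟨i, hi⟩ := ordSum_star_left (qGame q)
  rw [mw_fst]
  refine Or.inr ⟨toLeftMovesAdd (Sum.inr i), ?_⟩
  rw [add_moveLeft_inr (x := PGame.star) (y := sprig q) i]
  show ¬ (mw (PGame.star + (ordSum PGame.star (qGame q)).moveLeft i)).2
  rw [hi]
  exact not_mw_sz2

lemma mw_star_sprig2 (q : ℚ) : (mw (PGame.star + sprig q)).2 := by
  obtain ⟨j, hj⟩ := ordSum_star_right (qGame q)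
  rw [mw_snd]
  refine Or.inr ⟨toRightMovesAdd (Sum.inr j), ?_⟩
  rw [add_moveRight_inr (x := PGame.star) (y := sprig q) j]
  show ¬ (mw (PGame.star + (ordSum PGame.star (qGame q)).moveRight j)).1
  rw [hj]
  exact not_mw_sz1

lemma dicot_zero : Dicot 0 := by
  refine ⟨Or.inl ⟨inferInstance, inferInstance⟩, ?_, ?_⟩ <;> intro i <;> exact isEmptyElim i

lemma dicot_star : Dicot PGame.star := by
  show Dicot (PGame.mk PUnit PUnit (fun _ => 0) (fun _ => 0))
  exact ⟨Or.inr ⟨⟨PUnit.unit⟩, ⟨PUnit.unit⟩⟩, fun _ => dicot_zero, fun _ => dicot_zero⟩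

lemma mo_zs : mo ((0 : PG) + PGame.star) = Outcome.P := by
  rw [mo, outcomeOf, if_neg not_mw_zs1, if_neg not_mw_zs2]

lemma mo_ss (q : ℚ) : mo (sprig q + PGame.star) = Outcome.N := by
  rw [mo, outcomeOf, if_pos (mw_ss1 q), if_pos (mw_ss2 q)]

/-- For a nonzero dyadic rational `x`, `*:x` and `0` are incomparable modulo
the dicot universe; specifically `* + 0 ∈ P⁻` while `* + *:x ∈ N⁻`. -/
theorem stmt17 (x : ℚ) (hx : IsDyadic x) (hx0 : x ≠ 0) :
    (¬ ∀ W : PG, Dicot W → Outcome.le (mo (sprig x + W)) (mo (0 + W))) ∧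
    (¬ ∀ W : PG, Dicot W → Outcome.le (mo (0 + W)) (mo (sprig x + W))) ∧
    mo (PGame.star + 0) = Outcome.P ∧
    mo (PGame.star + sprig x) = Outcome.N := by
  refine ⟨?_, ?_, ?_, ?_⟩
  · intro h
    have := h PGame.star dicot_star
    rw [mo_ss, mo_zs] at this
    simp [Outcome.le] at this
  · intro h
    have := h PGame.star dicot_star
    rw [mo_ss, mo_zs] at this
    simp [Outcome.le] at this
  · rw [mo, outcomeOf, if_neg not_mw_sz1, if_neg not_mw_sz2]
  · rw [mo, outcomeOf, if_pos (mw_star_sprig1 x), if_pos (mw_star_sprig2 x)]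

end Sprigs
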